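/- Let n ≥ 2, α ≤ n/(n-1), and let f be a strictly positive, (n-1)-times differentiable function on [a,b] with f⁽ⁱ⁾ ≥ 0 for i = 1,…,n-1. Let g be a nonnegative, continuous, increasing function on [a,b]. Set A := inf{f⁽ⁿ⁻¹⁾(x)·f(x)^{n(1-α)} : x ∈ [a,b]} and K := f(a)^{n+1} if α ≥ 0, K := f(a)^{n+1-α}·f(b)^{α} if α < 0. Then (b-a)·K·g(a)ⁿ + (n+1-α)·(A/n!)·(∫_a^b f^{α}·g)ⁿ ≤ ∫_a^b f^{n+1}·gⁿ. -/

import Mathlib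

open Set MeasureTheory intervalIntegral Real

private lemma qdiv_helper {u v p q c : ℝ} (hu : u ≠ 0) (hv : v ≠ 0) :
    c / (u * v) * (u * p * q) = c / v * p * q := by
  field_simp

private lemma mono_aux {a b : ℝ} {h h' : ℝ → ℝ}
    (hc : ContinuousOn h (Set.Icc a b))
    (hd : ∀ x ∈ Set.Ioo a b, HasDerivAt h (h' x) x)
    (h0 : ∀ x ∈ Set.Ioo a b, 0 ≤ h' x) :
    MonotoneOn h (Set.Icc a b) := by
  apply monotoneOn_of_deriv_nonneg (convex_Icc a b) hc
  · intro x hx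
    rw [interior_Icc] at hx
    exact (hd x hx).differentiableAt.differentiableWithinAt
  · intro x hx
    rw [interior_Icc] at hx
    rw [(hd x hx).deriv]
    exact h0 x hx

theorem stmt2 (a b : ℝ) (hab : a < b) (n : ℕ) (hn : 2 ≤ n)
    (α : ℝ) (hα : α ≤ (n : ℝ) / ((n : ℝ) - 1))
    (f : ℝ → ℝ) (hf_pos : ∀ x ∈ Set.Icc a b, 0 < f x)
    (hf_diff : ∀ i < n - 1,
      DifferentiableOn ℝ (iteratedDerivWithin i f (Set.Icc a b)) (Set.Icc a b))
    (hf_nonneg : ∀ i, 1 ≤ i → i ≤ n - 1 → ∀ x ∈ Set.Icc a b,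
      0 ≤ iteratedDerivWithin i f (Set.Icc a b) x)
    (g : ℝ → ℝ) (hg_nonneg : ∀ x ∈ Set.Icc a b, 0 ≤ g x)
    (hg_cont : ContinuousOn g (Set.Icc a b))
    (hg_mono : MonotoneOn g (Set.Icc a b)) :
    (b - a) *
        (if 0 ≤ α then f a ^ (n + 1) else f a ^ ((n : ℝ) + 1 - α) * f b ^ α) *
        g a ^ n +
      ((n : ℝ) + 1 - α) *
        (sInf ((fun x => iteratedDerivWithin (n - 1) f (Set.Icc a b) x *
          f x ^ ((n : ℝ) * (1 - α))) '' Set.Icc a b) / (n.factorial : ℝ)) *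
        (∫ x in a..b, f x ^ α * g x) ^ n ≤
    ∫ x in a..b, f x ^ (n + 1) * g x ^ n := by
  have hab' : a ≤ b := hab.le
  have hma : a ∈ Set.Icc a b := ⟨le_rfl, hab'⟩
  have hmb : b ∈ Set.Icc a b := ⟨hab', le_rfl⟩
  -- continuity of f
  have hf_cont : ContinuousOn f (Set.Icc a b) := by
    have := (hf_diff 0 (by omega)).continuousOn
    rwa [iteratedDerivWithin_zero] at this
  -- derivative facts for iterated derivatives
  have hDderiv : ∀ j, j ≤ n - 2 → ∀ x ∈ Set.Ioo a b,
      HasDerivAt (iteratedDerivWithin j f (Set.Icc a b))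
        (iteratedDerivWithin (j + 1) f (Set.Icc a b) x) x := by
    intro j hj x hx
    have hxI : Set.Icc a b ∈ nhds x := Icc_mem_nhds hx.1 hx.2
    have hdx : DifferentiableAt ℝ (iteratedDerivWithin j f (Set.Icc a b)) x :=
      (hf_diff j (by omega) x (Ioo_subset_Icc_self hx)).differentiableAt hxI
    have heq : deriv (iteratedDerivWithin j f (Set.Icc a b)) x
        = iteratedDerivWithin (j + 1) f (Set.Icc a b) x := by
      rw [iteratedDerivWithin_succ,
        derivWithin_of_mem_nhds hxI]
    rw [← heq]
    exact hdx.hasDerivAt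
  have hf_deriv : ∀ x ∈ Set.Ioo a b,
      HasDerivAt f (iteratedDerivWithin 1 f (Set.Icc a b) x) x := by
    intro x hx
    have := hDderiv 0 (by omega) x hx
    rwa [iteratedDerivWithin_zero] at this
  have hD1 : ∀ x ∈ Set.Icc a b, 0 ≤ iteratedDerivWithin 1 f (Set.Icc a b) x :=
    hf_nonneg 1 le_rfl (by omega)
  have hf_mono : MonotoneOn f (Set.Icc a b) :=
    mono_aux hf_cont hf_deriv (fun x hx => hD1 x (Ioo_subset_Icc_self hx))
  -- J : primitive of f^α
  have hφ_cont : ContinuousOn (fun t => f t ^ α) (Set.Icc a b) :=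
    hf_cont.rpow_const (fun x hx => Or.inl (hf_pos x hx).ne')
  set J : ℝ → ℝ := fun x => ∫ t in a..x, f t ^ α with hJdef
  have hJ_cont : ContinuousOn J (Set.Icc a b) := by
    have : ContinuousOn (fun x => ∫ t in a..x, f t ^ α) (uIcc a b) :=
      intervalIntegral.continuousOn_primitive_interval
        ((hφ_cont.mono (by rw [uIcc_of_le hab'])).integrableOn_compact isCompact_uIcc)
    rwa [uIcc_of_le hab'] at this
  have hJ_deriv : ∀ x ∈ Set.Ioo a b, HasDerivAt J (f x ^ α) x := by
    intro x hx
    apply intervalIntegral.integral_hasDerivAt_right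
    · apply ContinuousOn.intervalIntegrable
      apply hφ_cont.mono
      rw [uIcc_of_le hx.1.le]
      exact Icc_subset_Icc le_rfl hx.2.le
    · exact ContinuousOn.stronglyMeasurableAtFilter isOpen_Ioo
        (hφ_cont.mono Ioo_subset_Icc_self) x hx
    · exact (hφ_cont x (Ioo_subset_Icc_self hx)).continuousAt (Icc_mem_nhds hx.1 hx.2)
  have hJa : J a = 0 := intervalIntegral.integral_same
  have hJ_nonneg : ∀ x ∈ Set.Icc a b, 0 ≤ J x := by
    intro x hx
    exact intervalIntegral.integral_nonneg hx.1
      (fun t ht => Real.rpow_nonneg (hf_pos t (Icc_subset_Icc le_rfl hx.2 ht)).le α)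
  -- the infimum A
  set A : ℝ := sInf ((fun x => iteratedDerivWithin (n - 1) f (Set.Icc a b) x *
      f x ^ ((n : ℝ) * (1 - α))) '' Set.Icc a b) with hAdef
  have hSnonneg : ∀ y ∈ ((fun x => iteratedDerivWithin (n - 1) f (Set.Icc a b) x *
      f x ^ ((n : ℝ) * (1 - α))) '' Set.Icc a b), 0 ≤ y := by
    rintro y ⟨x, hx, rfl⟩
    exact mul_nonneg (hf_nonneg (n - 1) (by omega) le_rfl x hx)
      (Real.rpow_nonneg (hf_pos x hx).le _)
  have hA_nonneg : 0 ≤ A := Real.sInf_nonneg hSnonneg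
  have hA_le : ∀ x ∈ Set.Icc a b,
      A ≤ iteratedDerivWithin (n - 1) f (Set.Icc a b) x * f x ^ ((n : ℝ) * (1 - α)) := by
    intro x hx
    exact csInf_le ⟨0, hSnonneg⟩ ⟨x, hx, rfl⟩
  -- the chain of inequalities
  have chain : ∀ k, k ≤ n - 2 → ∀ x ∈ Set.Icc a b,
      A / (Nat.factorial k : ℝ) * J x ^ k ≤
        iteratedDerivWithin (n - 1 - k) f (Set.Icc a b) x *
          f x ^ ((n : ℝ) - α * ((n : ℝ) - (k : ℝ))) := by
    intro k
    induction k with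
    | zero =>
      intro _ x hx
      have h0 := hA_le x hx
      have he : (n : ℝ) * (1 - α) = (n : ℝ) - α * ((n : ℝ) - ((0 : ℕ) : ℝ)) := by
        push_cast; ring
      rw [he] at h0
      simpa using h0
    | succ k ih =>
      intro hk x hx
      have hk' : k ≤ n - 2 := by omega
      have hfact_ne : (Nat.factorial k : ℝ) ≠ 0 := Nat.cast_ne_zero.2 k.factorial_ne_zero
      set E1 : ℝ := (n : ℝ) - α * ((n : ℝ) - ((k : ℝ) + 1)) with hE1def
      have hE1 : 0 ≤ E1 := by
        rcases le_or_gt α 0 with h | h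
        · have h1 : ((k : ℝ) + 1) ≤ (n : ℝ) := by
            have : (k : ℝ) + 1 ≤ (n : ℝ) - 2 + 1 := by
              have : (k : ℝ) ≤ ((n - 2 : ℕ) : ℝ) := Nat.cast_le.2 hk'
              have h2 : ((n - 2 : ℕ) : ℝ) = (n : ℝ) - 2 := by
                push_cast [Nat.cast_sub (by omega : 2 ≤ n)]; ring
              linarith [this, h2.le, h2.ge]
            have hn2 : (2 : ℝ) ≤ (n : ℝ) := by exact_mod_cast hn
            linarith
          nlinarith
        · have h1 : (0 : ℝ) < (n : ℝ) - 1 := by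
            have : (2 : ℝ) ≤ (n : ℝ) := by exact_mod_cast hn
            linarith
          have h2 : α * ((n : ℝ) - 1) ≤ n := (le_div_iff₀ h1).mp hα
          have h3 : (n : ℝ) - ((k : ℝ) + 1) ≤ (n : ℝ) - 1 := by
            have : (0 : ℝ) ≤ (k : ℝ) := Nat.cast_nonneg k
            linarith
          have h4 : α * ((n : ℝ) - ((k : ℝ) + 1)) ≤ α * ((n : ℝ) - 1) :=
            mul_le_mul_of_nonneg_left h3 h.le
          simp only [hE1def]
          linarith
      set P : ℝ → ℝ := fun y => iteratedDerivWithin (n - 2 - k) f (Set.Icc a b) y *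
          f y ^ E1 - A / (Nat.factorial (k + 1) : ℝ) * J y ^ (k + 1) with hPdef
      have hP_cont : ContinuousOn P (Set.Icc a b) := by
        apply ContinuousOn.sub
        · exact ((hf_diff (n - 2 - k) (by omega)).continuousOn).mul
            (hf_cont.rpow_const (fun x hx => Or.inl (hf_pos x hx).ne'))
        · exact continuousOn_const.mul (hJ_cont.pow (k + 1))
      have hP_deriv : ∀ x ∈ Set.Ioo a b, HasDerivAt P
          (iteratedDerivWithin (n - 1 - k) f (Set.Icc a b) x * f x ^ E1 +
            iteratedDerivWithin (n - 2 - k) f (Set.Icc a b) x *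
              (iteratedDerivWithin 1 f (Set.Icc a b) x * E1 * f x ^ (E1 - 1)) -
            A / (Nat.factorial (k + 1) : ℝ) * (((k : ℝ) + 1) * J x ^ k * f x ^ α)) x := by
        intro x hx
        have hd1 : HasDerivAt (iteratedDerivWithin (n - 2 - k) f (Set.Icc a b))
            (iteratedDerivWithin (n - 1 - k) f (Set.Icc a b) x) x := by
          have := hDderiv (n - 2 - k) (by omega) x hx
          have he : n - 2 - k + 1 = n - 1 - k := by omega
          rwa [he] at this
        have hd2 : HasDerivAt (fun y => f y ^ E1)
            (iteratedDerivWithin 1 f (Set.Icc a b) x * E1 * f x ^ (E1 - 1)) x :=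
          (hf_deriv x hx).rpow_const (Or.inl (hf_pos x (Ioo_subset_Icc_self hx)).ne')
        have hd3 : HasDerivAt (fun y => J y ^ (k + 1))
            (((k : ℝ) + 1) * J x ^ k * f x ^ α) x := by
          have := (hJ_deriv x hx).fun_pow (k + 1)
          simpa using this
        exact (hd1.mul hd2).sub (hd3.const_mul _)
      have hP_nonneg : ∀ x ∈ Set.Ioo a b,
          0 ≤ iteratedDerivWithin (n - 1 - k) f (Set.Icc a b) x * f x ^ E1 +
            iteratedDerivWithin (n - 2 - k) f (Set.Icc a b) x *
              (iteratedDerivWithin 1 f (Set.Icc a b) x * E1 * f x ^ (E1 - 1)) -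
            A / (Nat.factorial (k + 1) : ℝ) * (((k : ℝ) + 1) * J x ^ k * f x ^ α) := by
        intro x hx
        have hxI := Ioo_subset_Icc_self hx
        have hfx := hf_pos x hxI
        have hterm2 : 0 ≤ iteratedDerivWithin (n - 2 - k) f (Set.Icc a b) x *
            (iteratedDerivWithin 1 f (Set.Icc a b) x * E1 * f x ^ (E1 - 1)) :=
          mul_nonneg (hf_nonneg (n - 2 - k) (by omega) (by omega) x hxI)
            (mul_nonneg (mul_nonneg (hD1 x hxI) hE1) (Real.rpow_nonneg hfx.le _))
        have hIH := ih hk' x hxI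
        have hEsum : E1 = ((n : ℝ) - α * ((n : ℝ) - (k : ℝ))) + α := by
          simp only [hE1def]; ring
        have hterm1 : A / (Nat.factorial k : ℝ) * J x ^ k * f x ^ α ≤
            iteratedDerivWithin (n - 1 - k) f (Set.Icc a b) x * f x ^ E1 := by
          rw [hEsum, Real.rpow_add hfx, ← mul_assoc]
          exact mul_le_mul_of_nonneg_right hIH (Real.rpow_nonneg hfx.le α)
        have hterm3 : A / (Nat.factorial (k + 1) : ℝ) * (((k : ℝ) + 1) * J x ^ k * f x ^ α)
            = A / (Nat.factorial k : ℝ) * J x ^ k * f x ^ α := by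
          rw [Nat.factorial_succ]
          push_cast
          field_simp
        rw [hterm3]
        have h4 := hterm1.trans (le_add_of_nonneg_right hterm2)
        exact sub_nonneg.mpr h4
      have hPmono := mono_aux hP_cont hP_deriv hP_nonneg
      have hPa : 0 ≤ P a := by
        simp only [hPdef, hJa]
        rw [zero_pow (Nat.succ_ne_zero k)]
        simp only [mul_zero, sub_zero]
        exact mul_nonneg (hf_nonneg (n - 2 - k) (by omega) (by omega) a hma)
          (Real.rpow_nonneg (hf_pos a hma).le _)
      have hPx : 0 ≤ P x := hPa.trans (hPmono hma hx hx.1)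
      have he2 : n - 1 - (k + 1) = n - 2 - k := by omega
      rw [he2]
      have hgoal : A / (Nat.factorial (k + 1) : ℝ) * J x ^ (k + 1) ≤
          iteratedDerivWithin (n - 2 - k) f (Set.Icc a b) x * f x ^ E1 := by
        simp only [hPdef] at hPx
        linarith
      have he3 : (n : ℝ) - α * ((n : ℝ) - ((k + 1 : ℕ) : ℝ)) = E1 := by
        simp only [hE1def]; push_cast; ring
      rw [he3]
      exact hgoal
  -- positivity of n+1-α
  have hnR : (2:ℝ) ≤ (n:ℝ) := by exact_mod_cast hn
  have hN1 : (0:ℝ) < (n:ℝ) + 1 - α := by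
    rcases le_or_gt α 0 with h | h
    · linarith
    · have h1 : (0:ℝ) < (n:ℝ) - 1 := by linarith
      have h2 : α * ((n:ℝ) - 1) ≤ n := (le_div_iff₀ h1).mp hα
      nlinarith
  have hfac1 : (n - 1).factorial = (n - 1) * (n - 2).factorial := by
    conv_lhs => rw [show n - 1 = (n - 2) + 1 by omega]
    rw [Nat.factorial_succ, show n - 2 + 1 = n - 1 by omega]
  have hfac2 : n.factorial = n * (n - 1).factorial := by
    conv_lhs => rw [show n = (n - 1) + 1 by omega]
    rw [Nat.factorial_succ, show n - 1 + 1 = n by omega]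
  -- the dagger inequality
  have dagger : ∀ x ∈ Set.Icc a b,
      f a ^ ((n : ℝ) + 1 - α) + ((n : ℝ) + 1 - α) * A / ((n - 1).factorial : ℝ) * J x ^ (n - 1)
        ≤ f x ^ ((n : ℝ) + 1 - α) := by
    set W : ℝ → ℝ := fun y => f y ^ ((n : ℝ) + 1 - α) -
        ((n : ℝ) + 1 - α) * A / ((n - 1).factorial : ℝ) * J y ^ (n - 1) with hWdef
    have hW_cont : ContinuousOn W (Set.Icc a b) :=
      (hf_cont.rpow_const (fun x hx => Or.inl (hf_pos x hx).ne')).sub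
        (continuousOn_const.mul (hJ_cont.pow (n - 1)))
    have hW_deriv : ∀ x ∈ Set.Ioo a b, HasDerivAt W
        (iteratedDerivWithin 1 f (Set.Icc a b) x * ((n : ℝ) + 1 - α) *
            f x ^ ((n : ℝ) + 1 - α - 1) -
          ((n : ℝ) + 1 - α) * A / ((n - 1).factorial : ℝ) *
            (((n - 1 : ℕ) : ℝ) * J x ^ (n - 1 - 1) * f x ^ α)) x := by
      intro x hx
      exact ((hf_deriv x hx).rpow_const
          (Or.inl (hf_pos x (Ioo_subset_Icc_self hx)).ne')).sub
        (((hJ_deriv x hx).pow (n - 1)).const_mul _)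
    have hW_nonneg : ∀ x ∈ Set.Ioo a b,
        0 ≤ iteratedDerivWithin 1 f (Set.Icc a b) x * ((n : ℝ) + 1 - α) *
            f x ^ ((n : ℝ) + 1 - α - 1) -
          ((n : ℝ) + 1 - α) * A / ((n - 1).factorial : ℝ) *
            (((n - 1 : ℕ) : ℝ) * J x ^ (n - 1 - 1) * f x ^ α) := by
      intro x hx
      have hxI := Ioo_subset_Icc_self hx
      have hfx := hf_pos x hxI
      have hct := chain (n - 2) le_rfl x hxI
      rw [show n - 1 - (n - 2) = 1 by omega] at hct
      rw [show (n : ℝ) - α * ((n : ℝ) - ((n - 2 : ℕ) : ℝ)) = (n : ℝ) - 2 * α by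
        push_cast [Nat.cast_sub (show 2 ≤ n by omega)]; ring] at hct
      have hXeq : ((n : ℝ) + 1 - α) * A / ((n - 1).factorial : ℝ) *
          (((n - 1 : ℕ) : ℝ) * J x ^ (n - 1 - 1) * f x ^ α)
          = ((n : ℝ) + 1 - α) * (A / ((n - 2).factorial : ℝ) * J x ^ (n - 2)) * f x ^ α := by
        rw [show n - 1 - 1 = n - 2 by omega, hfac1, Nat.cast_mul]
        have h1 : ((n - 2).factorial : ℝ) ≠ 0 := Nat.cast_ne_zero.2 (n - 2).factorial_ne_zero
        have h2 : ((n - 1 : ℕ) : ℝ) ≠ 0 := Nat.cast_ne_zero.2 (by omega)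
        rw [qdiv_helper h2 h1]
        ring
      have hfpow : f x ^ ((n : ℝ) + 1 - α - 1) = f x ^ ((n : ℝ) - 2 * α) * f x ^ α := by
        rw [← Real.rpow_add hfx]; ring_nf
      rw [hXeq, hfpow]
      have hstep : ((n : ℝ) + 1 - α) * (A / ((n - 2).factorial : ℝ) * J x ^ (n - 2)) * f x ^ α
          ≤ ((n : ℝ) + 1 - α) * (iteratedDerivWithin 1 f (Set.Icc a b) x *
            f x ^ ((n : ℝ) - 2 * α)) * f x ^ α :=
        mul_le_mul_of_nonneg_right (mul_le_mul_of_nonneg_left hct hN1.le)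
          (Real.rpow_nonneg hfx.le α)
      nlinarith [hstep]
    have hWmono := mono_aux hW_cont hW_deriv hW_nonneg
    intro x hx
    have hWa : W a = f a ^ ((n : ℝ) + 1 - α) := by
      simp only [hWdef, hJa]
      rw [zero_pow (show n - 1 ≠ 0 by omega)]
      ring
    have := hWmono hma hx hx.1
    rw [hWa] at this
    simp only [hWdef] at this
    linarith
  -- K facts
  set K : ℝ := if 0 ≤ α then f a ^ (n + 1) else f a ^ ((n : ℝ) + 1 - α) * f b ^ α with hKdef
  have hK_nonneg : 0 ≤ K := by
    rw [hKdef]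
    split_ifs
    · exact pow_nonneg (hf_pos a hma).le _
    · exact mul_nonneg (Real.rpow_nonneg (hf_pos a hma).le _)
        (Real.rpow_nonneg (hf_pos b hmb).le _)
  have hK_le : ∀ x ∈ Set.Icc a b, K ≤ f a ^ ((n : ℝ) + 1 - α) * f x ^ α := by
    intro x hx
    rw [hKdef]
    split_ifs with h
    · have h1 : f a ^ (n + 1) = f a ^ ((n : ℝ) + 1 - α) * f a ^ α := by
        rw [← Real.rpow_add (hf_pos a hma)]
        rw [show (n : ℝ) + 1 - α + α = ((n + 1 : ℕ) : ℝ) by push_cast; ring]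
        rw [Real.rpow_natCast]
      rw [h1]
      exact mul_le_mul_of_nonneg_left
        (Real.rpow_le_rpow (hf_pos a hma).le (hf_mono hma hx hx.1) h)
        (Real.rpow_nonneg (hf_pos a hma).le _)
    · exact mul_le_mul_of_nonneg_left
        (Real.rpow_le_rpow_of_nonpos (hf_pos x hx) (hf_mono hx hmb hx.2) (not_le.1 h).le)
        (Real.rpow_nonneg (hf_pos a hma).le _)
  -- the bracket inequality
  have bracket : ∀ x ∈ Set.Icc a b,
      K ≤ f x ^ (n + 1) -
        ((n : ℝ) + 1 - α) * A / ((n - 1).factorial : ℝ) * J x ^ (n - 1) * f x ^ α := by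
    intro x hx
    have hfx := hf_pos x hx
    have hd := dagger x hx
    have h1 : (f a ^ ((n : ℝ) + 1 - α) +
          ((n : ℝ) + 1 - α) * A / ((n - 1).factorial : ℝ) * J x ^ (n - 1)) * f x ^ α
        ≤ f x ^ ((n : ℝ) + 1 - α) * f x ^ α :=
      mul_le_mul_of_nonneg_right hd (Real.rpow_nonneg hfx.le α)
    rw [← Real.rpow_add hfx, show (n : ℝ) + 1 - α + α = ((n + 1 : ℕ) : ℝ) by push_cast; ring,
      Real.rpow_natCast, add_mul] at h1
    have h2 := hK_le x hx
    linarith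
  -- primitives I and T
  have hψ_cont : ContinuousOn (fun t => f t ^ α * g t) (Set.Icc a b) := hφ_cont.mul hg_cont
  have hχ_cont : ContinuousOn (fun t => f t ^ (n + 1) * g t ^ n) (Set.Icc a b) :=
    (hf_cont.pow _).mul (hg_cont.pow _)
  set I : ℝ → ℝ := fun x => ∫ t in a..x, f t ^ α * g t with hIdef
  set T : ℝ → ℝ := fun x => ∫ t in a..x, f t ^ (n + 1) * g t ^ n with hTdef
  have hI_cont : ContinuousOn I (Set.Icc a b) := by
    have : ContinuousOn (fun x => ∫ t in a..x, f t ^ α * g t) (uIcc a b) :=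
      intervalIntegral.continuousOn_primitive_interval
        ((hψ_cont.mono (by rw [uIcc_of_le hab'])).integrableOn_compact isCompact_uIcc)
    rwa [uIcc_of_le hab'] at this
  have hT_cont : ContinuousOn T (Set.Icc a b) := by
    have : ContinuousOn (fun x => ∫ t in a..x, f t ^ (n + 1) * g t ^ n) (uIcc a b) :=
      intervalIntegral.continuousOn_primitive_interval
        ((hχ_cont.mono (by rw [uIcc_of_le hab'])).integrableOn_compact isCompact_uIcc)
    rwa [uIcc_of_le hab'] at this
  have hI_deriv : ∀ x ∈ Set.Ioo a b, HasDerivAt I (f x ^ α * g x) x := by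
    intro x hx
    apply intervalIntegral.integral_hasDerivAt_right
    · apply ContinuousOn.intervalIntegrable
      apply hψ_cont.mono
      rw [uIcc_of_le hx.1.le]
      exact Icc_subset_Icc le_rfl hx.2.le
    · exact ContinuousOn.stronglyMeasurableAtFilter isOpen_Ioo
        (hψ_cont.mono Ioo_subset_Icc_self) x hx
    · exact (hψ_cont x (Ioo_subset_Icc_self hx)).continuousAt (Icc_mem_nhds hx.1 hx.2)
  have hT_deriv : ∀ x ∈ Set.Ioo a b, HasDerivAt T (f x ^ (n + 1) * g x ^ n) x := by
    intro x hx
    apply intervalIntegral.integral_hasDerivAt_right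
    · apply ContinuousOn.intervalIntegrable
      apply hχ_cont.mono
      rw [uIcc_of_le hx.1.le]
      exact Icc_subset_Icc le_rfl hx.2.le
    · exact ContinuousOn.stronglyMeasurableAtFilter isOpen_Ioo
        (hχ_cont.mono Ioo_subset_Icc_self) x hx
    · exact (hχ_cont x (Ioo_subset_Icc_self hx)).continuousAt (Icc_mem_nhds hx.1 hx.2)
  have hIa : I a = 0 := intervalIntegral.integral_same
  have hI_nonneg : ∀ x ∈ Set.Icc a b, 0 ≤ I x := by
    intro x hx
    refine intervalIntegral.integral_nonneg hx.1 (fun t ht => ?_)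
    have htI : t ∈ Set.Icc a b := Icc_subset_Icc le_rfl hx.2 ht
    exact mul_nonneg (Real.rpow_nonneg (hf_pos t htI).le α) (hg_nonneg t htI)
  have hI_le : ∀ x ∈ Set.Icc a b, I x ≤ g x * J x := by
    intro x hx
    have hsub : Set.Icc a x ⊆ Set.Icc a b := Icc_subset_Icc le_rfl hx.2
    have h1 : I x ≤ ∫ t in a..x, f t ^ α * g x := by
      apply intervalIntegral.integral_mono_on hx.1
      · apply ContinuousOn.intervalIntegrable
        apply hψ_cont.mono
        rwa [uIcc_of_le hx.1]
      · apply ContinuousOn.intervalIntegrable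
        apply (ContinuousOn.mul (hφ_cont.mono hsub) continuousOn_const).mono
        rw [uIcc_of_le hx.1]
      · intro t ht
        exact mul_le_mul_of_nonneg_left (hg_mono (hsub ht) hx ht.2)
          (Real.rpow_nonneg (hf_pos t (hsub ht)).le α)
    rw [intervalIntegral.integral_mul_const] at h1
    rw [mul_comm]
    exact h1
  -- the main function F
  set c₁ : ℝ := ((n : ℝ) + 1 - α) * (A / (n.factorial : ℝ)) with hc₁def
  have hc₁_nonneg : 0 ≤ c₁ :=
    mul_nonneg hN1.le (div_nonneg hA_nonneg (Nat.cast_nonneg _))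
  set F : ℝ → ℝ := fun x => T x - (x - a) * (K * g a ^ n) - c₁ * I x ^ n with hFdef
  have hF_cont : ContinuousOn F (Set.Icc a b) :=
    (hT_cont.sub (((continuousOn_id.sub continuousOn_const)).mul continuousOn_const)).sub
      (continuousOn_const.mul (hI_cont.pow n))
  have hF_deriv : ∀ x ∈ Set.Ioo a b, HasDerivAt F
      (f x ^ (n + 1) * g x ^ n - K * g a ^ n -
        c₁ * ((n : ℝ) * I x ^ (n - 1) * (f x ^ α * g x))) x := by
    intro x hx
    have hlin : HasDerivAt (fun y => (y - a) * (K * g a ^ n)) (K * g a ^ n) x := by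
      have := ((hasDerivAt_id x).sub_const a).mul_const (K * g a ^ n)
      simpa using this
    have hIpow : HasDerivAt (fun y => I y ^ n) ((n : ℝ) * I x ^ (n - 1) * (f x ^ α * g x)) x := by
      have := (hI_deriv x hx).fun_pow n
      simpa using this
    exact ((hT_deriv x hx).sub hlin).sub (hIpow.const_mul c₁)
  have hF'_nonneg : ∀ x ∈ Set.Ioo a b,
      0 ≤ f x ^ (n + 1) * g x ^ n - K * g a ^ n -
        c₁ * ((n : ℝ) * I x ^ (n - 1) * (f x ^ α * g x)) := by
    intro x hx
    clear_value J A K I T F c₁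
    have hxI := Ioo_subset_Icc_self hx
    have hgx : 0 ≤ g x := hg_nonneg x hxI
    have hfx := hf_pos x hxI
    have hJx := hJ_nonneg x hxI
    have s1 : I x ^ (n - 1) ≤ (g x * J x) ^ (n - 1) :=
      pow_le_pow_left₀ (hI_nonneg x hxI) (hI_le x hxI) (n - 1)
    have s2 : c₁ * ((n : ℝ) * I x ^ (n - 1) * (f x ^ α * g x)) ≤
        c₁ * ((n : ℝ) * (g x * J x) ^ (n - 1) * (f x ^ α * g x)) := by
      apply mul_le_mul_of_nonneg_left _ hc₁_nonneg
      apply mul_le_mul_of_nonneg_right _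
        (mul_nonneg (Real.rpow_nonneg hfx.le α) hgx)
      exact mul_le_mul_of_nonneg_left s1 (Nat.cast_nonneg n)
    have s4 : c₁ * ((n : ℝ) * (g x * J x) ^ (n - 1) * (f x ^ α * g x)) =
        g x ^ n * (((n : ℝ) + 1 - α) * A / ((n - 1).factorial : ℝ) * J x ^ (n - 1) * f x ^ α) := by
      rw [show g x ^ n = g x ^ (n - 1) * g x by
        conv_lhs => rw [show n = (n - 1) + 1 by omega]
        rw [pow_succ]]
      rw [mul_pow, hc₁def, hfac2, Nat.cast_mul]
      have h1 : ((n - 1).factorial : ℝ) ≠ 0 := Nat.cast_ne_zero.2 (n - 1).factorial_ne_zero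
      have h2 : (n : ℝ) ≠ 0 := by positivity
      field_simp
    have s5 : g x ^ n * K ≤ g x ^ n * f x ^ (n + 1) -
        g x ^ n * (((n : ℝ) + 1 - α) * A / ((n - 1).factorial : ℝ) * J x ^ (n - 1) * f x ^ α) := by
      have := mul_le_mul_of_nonneg_left (bracket x hxI) (pow_nonneg hgx n)
      rw [mul_sub] at this
      exact this
    have s6 : K * g a ^ n ≤ K * g x ^ n :=
      mul_le_mul_of_nonneg_left
        (pow_le_pow_left₀ (hg_nonneg a hma) (hg_mono hma hxI hx.1.le) n) hK_nonneg
    linarith [s2, s4, s5, s6]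
  have hFmono := mono_aux hF_cont hF_deriv hF'_nonneg
  have hFa : F a = 0 := by
    simp only [hFdef, hIa, hTdef]
    rw [intervalIntegral.integral_same, zero_pow (show n ≠ 0 by omega)]
    ring
  have hFb : 0 ≤ F b := by
    rw [← hFa]
    exact hFmono hma hmb hab'
  simp only [hFdef] at hFb
  have hIb : I b = ∫ x in a..b, f x ^ α * g x := by simp only [hIdef]
  have hTb : T b = ∫ x in a..b, f x ^ (n + 1) * g x ^ n := by simp only [hTdef]
  rw [← hIb, ← hTb]
  clear_value A K I T c₁
  linarith [hFb]
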